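/- Let w ∈ S_n avoid 3412 and 4231, let s be a simple transposition with sw < w < ws, and suppose z satisfies z ≤ w, ℓ(z) = ℓ(w) − 1, and zs < z. Then z avoids 3412 and 4231. -/

import Mathlib

open Equiv

/-- `rk w i j` = #{k ≤ i : w(k) ≤ j} (1-indexed), for `w ∈ S_n`. -/
def rk {n : ℕ} (w : Equiv.Perm (Fin n)) (i j : ℕ) : ℕ :=
  (Finset.univ.filter (fun k : Fin n => (k : ℕ) + 1 ≤ i ∧ (w k : ℕ) + 1 ≤ j)).card

/-- Bruhat order on `S_n` via the rank-matrix criterion: `z ≤ w` iff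
`r_{i,j}(z) ≥ r_{i,j}(w)` for all `i,j`. -/
def BruhatLE {n : ℕ} (z w : Equiv.Perm (Fin n)) : Prop :=
  ∀ i ≤ n, ∀ j ≤ n, rk w i j ≤ rk z i j

def BruhatLT {n : ℕ} (z w : Equiv.Perm (Fin n)) : Prop :=
  BruhatLE z w ∧ z ≠ w

/-- Coxeter length = number of inversions. -/
def len {n : ℕ} (w : Equiv.Perm (Fin n)) : ℕ :=
  (Finset.univ.filter (fun p : Fin n × Fin n => p.1 < p.2 ∧ w p.2 < w p.1)).card

/-- One-line notation of `w`, 1-indexed, extended by the identity outside `[1,n]`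
(so that `w(n+1) = n+1`). -/
def ol {n : ℕ} (w : Equiv.Perm (Fin n)) (k : ℕ) : ℕ :=
  if h : 1 ≤ k ∧ k ≤ n then ((w ⟨k - 1, by omega⟩ : Fin n) : ℕ) + 1 else k

/-- The coessential set of `w` (1-indexed pairs). -/
def Coess {n : ℕ} (w : Equiv.Perm (Fin n)) : Set (ℕ × ℕ) :=
  {p | 1 ≤ p.1 ∧ p.1 ≤ n ∧ 1 ≤ p.2 ∧ p.2 ≤ n ∧
    ol w p.1 ≤ p.2 ∧ p.2 < ol w (p.1 + 1) ∧
    ol w⁻¹ p.2 ≤ p.1 ∧ p.1 < ol w⁻¹ (p.2 + 1)}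

/-- `w` contains the pattern 312. -/
def Has312 {n : ℕ} (w : Equiv.Perm (Fin n)) : Prop :=
  ∃ a b c : Fin n, a < b ∧ b < c ∧ w b < w c ∧ w c < w a

/-- `w` contains the pattern 3412. -/
def Has3412 {n : ℕ} (w : Equiv.Perm (Fin n)) : Prop :=
  ∃ a b c d : Fin n, a < b ∧ b < c ∧ c < d ∧ w c < w d ∧ w d < w a ∧ w a < w b

/-- `w` contains the pattern 4231. -/
def Has4231 {n : ℕ} (w : Equiv.Perm (Fin n)) : Prop :=
  ∃ a b c d : Fin n, a < b ∧ b < c ∧ c < d ∧ w d < w b ∧ w b < w c ∧ w c < w a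

/-- `w` is smooth iff it avoids 3412 and 4231. -/
def SmoothPerm {n : ℕ} (w : Equiv.Perm (Fin n)) : Prop := ¬ Has3412 w ∧ ¬ Has4231 w

/-- `w` is codominant iff `i ≤ j` for every `(i,j)` in the coessential set. -/
def Codominant {n : ℕ} (w : Equiv.Perm (Fin n)) : Prop :=
  ∀ p ∈ Coess w, p.1 ≤ p.2

/-- Lexicographic comparison on one-line notations. -/
def LexLe {n : ℕ} (u w : Equiv.Perm (Fin n)) : Prop :=
  u = w ∨ ∃ i : Fin n, (∀ j < i, u j = w j) ∧ u i < w i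

/-- `m` is a Hessenberg function (0-indexed): non-decreasing and `m i ≥ i`. -/
def Hess {n : ℕ} (m : Fin n → Fin n) : Prop :=
  Monotone m ∧ ∀ i, i ≤ m i

/-- `w` is the lexicographically greatest permutation with `w i ≤ m i` for all `i`. -/
def IsLexMax {n : ℕ} (m : Fin n → Fin n) (w : Equiv.Perm (Fin n)) : Prop :=
  (∀ i, w i ≤ m i) ∧ ∀ u : Equiv.Perm (Fin n), (∀ i, u i ≤ m i) → LexLe u w

instance {n : ℕ} (z w : Equiv.Perm (Fin n)) : Decidable (BruhatLE z w) := by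
  unfold BruhatLE; exact Nat.decidableBallLE _ _



namespace StmtAux
variable {n : ℕ}

lemma rk_eq_sum (w : Perm (Fin n)) (a b : ℕ) :
    rk w a b = ∑ k : Fin n, if (k : ℕ) + 1 ≤ a ∧ (w k : ℕ) + 1 ≤ b then 1 else 0 :=
  Finset.card_filter _ _

lemma rk_succ (w : Perm (Fin n)) (m : ℕ) (hm : m < n) (b : ℕ) :
    rk w (m+1) b = rk w m b + (if (w ⟨m, hm⟩ : ℕ) + 1 ≤ b then 1 else 0) := by
  rw [rk_eq_sum, rk_eq_sum]
  rw [← Finset.sum_erase_add _ _ (Finset.mem_univ (⟨m, hm⟩ : Fin n)),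
      ← Finset.sum_erase_add _ _ (Finset.mem_univ (⟨m, hm⟩ : Fin n))]
  have h1 : ∀ k ∈ Finset.univ.erase (⟨m, hm⟩ : Fin n),
      (if (k : ℕ) + 1 ≤ m + 1 ∧ (w k : ℕ) + 1 ≤ b then 1 else 0)
      = (if (k : ℕ) + 1 ≤ m ∧ (w k : ℕ) + 1 ≤ b then (1:ℕ) else 0) := by
    intro k hk
    have : (k : ℕ) ≠ m := by
      intro h; exact (Finset.mem_erase.1 hk).1 (Fin.ext h)
    split_ifs <;> omega
  rw [Finset.sum_congr rfl h1]
  have : ((⟨m, hm⟩ : Fin n) : ℕ) = m := rfl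
  split_ifs <;> simp <;> omega

lemma rk_split (w : Perm (Fin n)) (a : ℕ) {b' b : ℕ} (h : b' ≤ b) :
    rk w a b = rk w a b' +
      (Finset.univ.filter (fun k : Fin n => (k : ℕ) + 1 ≤ a ∧ b' + 1 ≤ (w k : ℕ) + 1 ∧ (w k : ℕ) + 1 ≤ b)).card := by
  rw [rk_eq_sum, rk_eq_sum, Finset.card_filter, ← Finset.sum_add_distrib]
  apply Finset.sum_congr rfl
  intro k _
  split_ifs <;> omega

lemma rk_mul_swap (w : Perm (Fin n)) (i j : Fin n) (hij : i ≠ j) (a b : ℕ) :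
    rk (w * Equiv.swap i j) a b
      + (if (i : ℕ) + 1 ≤ a ∧ (w i : ℕ) + 1 ≤ b then 1 else 0)
      + (if (j : ℕ) + 1 ≤ a ∧ (w j : ℕ) + 1 ≤ b then 1 else 0)
    = rk w a b
      + (if (i : ℕ) + 1 ≤ a ∧ (w j : ℕ) + 1 ≤ b then 1 else 0)
      + (if (j : ℕ) + 1 ≤ a ∧ (w i : ℕ) + 1 ≤ b then 1 else 0) := by
  rw [rk_eq_sum, rk_eq_sum]
  rw [← Finset.sum_erase_add _ _ (Finset.mem_univ j), ← Finset.sum_erase_add _ _ (Finset.mem_univ j)]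
  have hji : i ∈ (Finset.univ.erase j) := Finset.mem_erase.2 ⟨hij, Finset.mem_univ i⟩
  rw [← Finset.sum_erase_add _ _ hji, ← Finset.sum_erase_add _ _ hji]
  have hterm : ∀ k ∈ (Finset.univ.erase j).erase i,
      (if (k : ℕ) + 1 ≤ a ∧ ((w * Equiv.swap i j) k : ℕ) + 1 ≤ b then (1:ℕ) else 0)
      = (if (k : ℕ) + 1 ≤ a ∧ (w k : ℕ) + 1 ≤ b then 1 else 0) := by
    intro k hk
    have hki : k ≠ i := (Finset.mem_erase.1 hk).1
    have hkj : k ≠ j := (Finset.mem_erase.1 (Finset.mem_erase.1 hk).2).1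
    rw [Perm.mul_apply, Equiv.swap_apply_of_ne_of_ne hki hkj]
  rw [Finset.sum_congr rfl hterm]
  have e1 : (w * Equiv.swap i j) i = w j := by rw [Perm.mul_apply, Equiv.swap_apply_left]
  have e2 : (w * Equiv.swap i j) j = w i := by rw [Perm.mul_apply, Equiv.swap_apply_right]
  rw [e1, e2]
  ring

/-- oriented version -/
lemma rk_swap_eq (w : Perm (Fin n)) (i j : Fin n) (hij : i < j) (hv : w j < w i) (a b : ℕ) :
    rk (w * Equiv.swap i j) a b
    = rk w a b + (if (i : ℕ) < a ∧ a ≤ (j : ℕ) ∧ (w j : ℕ) < b ∧ b ≤ (w i : ℕ) then 1 else 0) := by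
  have := rk_mul_swap w i j (ne_of_lt hij) a b
  have hij' : (i:ℕ) < (j:ℕ) := hij
  have hv' : (w j : ℕ) < (w i : ℕ) := hv
  split_ifs at this ⊢ <;> omega


def condIJ (i j : Fin n) (p : Fin n × Fin n) : Prop :=
  (p.1 = i ∧ i < p.2 ∧ p.2 < j) ∨ (p.2 = j ∧ i < p.1 ∧ p.1 < j)

instance (i j : Fin n) (p : Fin n × Fin n) : Decidable (condIJ i j p) := by
  unfold condIJ; infer_instance

def psi (i j : Fin n) (p : Fin n × Fin n) : Fin n × Fin n :=
  if condIJ i j p then p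
  else if Equiv.swap i j p.1 < Equiv.swap i j p.2
    then (Equiv.swap i j p.1, Equiv.swap i j p.2)
    else (Equiv.swap i j p.2, Equiv.swap i j p.1)

lemma psi_pos {i j : Fin n} {p : Fin n × Fin n} (h : condIJ i j p) : psi i j p = p := by
  unfold psi; rw [if_pos h]

lemma psi_neg_lt {i j : Fin n} {p : Fin n × Fin n} (h : ¬ condIJ i j p)
    (h' : Equiv.swap i j p.1 < Equiv.swap i j p.2) :
    psi i j p = (Equiv.swap i j p.1, Equiv.swap i j p.2) := by
  unfold psi; rw [if_neg h, if_pos h']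

lemma psi_neg_ge {i j : Fin n} {p : Fin n × Fin n} (h : ¬ condIJ i j p)
    (h' : ¬ Equiv.swap i j p.1 < Equiv.swap i j p.2) :
    psi i j p = (Equiv.swap i j p.2, Equiv.swap i j p.1) := by
  unfold psi; rw [if_neg h, if_neg h']

lemma len_mul_swap_lt (w : Perm (Fin n)) (i j : Fin n) (hij : i < j) (hv : w j < w i) :
    len (w * Equiv.swap i j) < len w := by
  have hti : Equiv.swap i j i = j := Equiv.swap_apply_left i j
  have htj : Equiv.swap i j j = i := Equiv.swap_apply_right i j
  have hto : ∀ x : Fin n, x ≠ i → x ≠ j → Equiv.swap i j x = x :=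
    fun x h1 h2 => Equiv.swap_apply_of_ne_of_ne h1 h2
  have hijne : i ≠ j := ne_of_lt hij
  have hinv : ∀ p : Fin n × Fin n, p.1 < p.2 → psi i j (psi i j p) = p := by
    rintro ⟨a, b⟩ hab
    simp only at hab
    by_cases hc : condIJ i j (a, b)
    · rw [psi_pos hc, psi_pos hc]
    · rcases eq_or_ne a i with hai | hai
      · rcases eq_or_ne b j with hbj | hbj
        · -- a = i, b = j
          have hsa : Equiv.swap i j a = j := by rw [hai]; exact hti
          have hsb : Equiv.swap i j b = i := by rw [hbj]; exact htj
          have e1 : psi i j (a, b) = (a, b) := by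
            rw [psi_neg_ge hc (by simp only [hsa, hsb]; exact not_lt.2 hij.le)]
            simp only [hsa, hsb]
            rw [← hai, ← hbj]
          rw [e1, e1]
        · -- a = i, b > j
          have hib : i < b := hai ▸ hab
          have hbj' : j < b := by
            rcases lt_or_ge j b with h | h
            · exact h
            · exact absurd (Or.inl ⟨hai, hib, lt_of_le_of_ne h hbj⟩) hc
          have hsa : Equiv.swap i j a = j := by rw [hai]; exact hti
          have hsb : Equiv.swap i j b = b := hto b (ne_of_gt hib) hbj
          have e1 : psi i j (a, b) = (j, b) := by
            rw [psi_neg_lt hc (by simp only [hsa, hsb]; exact hbj')]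
            simp only [hsa, hsb]
          rw [e1]
          have hc2 : ¬ condIJ i j (j, b) := by
            rintro (⟨h1, -, -⟩ | ⟨h1, h2, -⟩)
            · exact hijne h1.symm
            · exact absurd h1 (ne_of_gt hbj')
          have e2 : psi i j (j, b) = (a, b) := by
            rw [psi_neg_lt hc2 (by simp only [htj, hsb]; exact hib)]
            rw [htj, hsb, hai]
          exact e2
      · rcases eq_or_ne a j with haj | haj
        · -- a = j, b > j
          have hjb : j < b := haj ▸ hab
          have hsa : Equiv.swap i j a = i := by rw [haj]; exact htj
          have hsb : Equiv.swap i j b = b := hto b (ne_of_gt (lt_trans hij hjb)) (ne_of_gt hjb)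
          have e1 : psi i j (a, b) = (i, b) := by
            rw [psi_neg_lt hc (by simp only [hsa, hsb]; exact lt_trans hij hjb)]
            simp only [hsa, hsb]
          rw [e1]
          have hc2 : ¬ condIJ i j (i, b) := by
            rintro (⟨-, -, h3⟩ | ⟨h1, -, -⟩)
            · exact absurd h3 (not_lt.2 hjb.le)
            · exact absurd h1 (ne_of_gt hjb)
          have e2 : psi i j (i, b) = (a, b) := by
            rw [psi_neg_lt hc2 (by simp only [hti, hsb]; exact hjb)]
            rw [hti, hsb, haj]
          exact e2
        · rcases eq_or_ne b i with hbi | hbi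
          · -- b = i, a < i
            have hai' : a < i := hbi ▸ hab
            have hsa : Equiv.swap i j a = a := hto a hai haj
            have hsb : Equiv.swap i j b = j := by rw [hbi]; exact hti
            have e1 : psi i j (a, b) = (a, j) := by
              rw [psi_neg_lt hc (by simp only [hsa, hsb]; exact lt_trans hai' hij)]
              simp only [hsa, hsb]
            rw [e1]
            have hc2 : ¬ condIJ i j (a, j) := by
              rintro (⟨h1, -, -⟩ | ⟨-, h2, -⟩)
              · exact hai h1
              · exact absurd h2 (not_lt.2 hai'.le)
            have e2 : psi i j (a, j) = (a, b) := by
              rw [psi_neg_lt hc2 (by simp only [hsa, htj]; exact hai')]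
              rw [hsa, htj, hbi]
            exact e2
          · rcases eq_or_ne b j with hbj | hbj
            · -- b = j, a < i
              have haj' : a < j := hbj ▸ hab
              have hai' : a < i := by
                rcases lt_or_ge a i with h | h
                · exact h
                · exact absurd (Or.inr ⟨hbj, lt_of_le_of_ne h (Ne.symm hai), haj'⟩) hc
              have hsa : Equiv.swap i j a = a := hto a hai haj
              have hsb : Equiv.swap i j b = i := by rw [hbj]; exact htj
              have e1 : psi i j (a, b) = (a, i) := by
                rw [psi_neg_lt hc (by simp only [hsa, hsb]; exact hai')]
                simp only [hsa, hsb]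
              rw [e1]
              have hc2 : ¬ condIJ i j (a, i) := by
                rintro (⟨h1, -, -⟩ | ⟨h1, -, -⟩)
                · exact hai h1
                · exact hijne h1
              have e2 : psi i j (a, i) = (a, b) := by
                rw [psi_neg_lt hc2 (by simp only [hsa, hti]; exact haj')]
                rw [hsa, hti, hbj]
              exact e2
            · -- generic
              have hsa : Equiv.swap i j a = a := hto a hai haj
              have hsb : Equiv.swap i j b = b := hto b hbi hbj
              have e1 : psi i j (a, b) = (a, b) := by
                rw [psi_neg_lt hc (by simp only [hsa, hsb]; exact hab)]
                simp only [hsa, hsb]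
              rw [e1, e1]
  -- mapping property
  have hmap : ∀ p : Fin n × Fin n, p.1 < p.2 → (w * Equiv.swap i j) p.2 < (w * Equiv.swap i j) p.1 →
      ((psi i j p).1 < (psi i j p).2 ∧ w (psi i j p).2 < w (psi i j p).1 ∧ psi i j p ≠ (i, j)) := by
    rintro ⟨a, b⟩ hab hzv
    simp only at hab
    simp only [Perm.mul_apply] at hzv
    by_cases hc : condIJ i j (a, b)
    · rw [psi_pos hc]
      rcases hc with ⟨hai, hib, hbj⟩ | ⟨hbj, hia, haj⟩
      · simp only at hai hib hbj
        have hsa : Equiv.swap i j a = j := by rw [hai]; exact hti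
        have hsb : Equiv.swap i j b = b := hto b (ne_of_gt hib) (ne_of_lt hbj)
        rw [hsa, hsb] at hzv
        refine ⟨hab, ?_, fun h => (ne_of_lt hbj) (congrArg Prod.snd h)⟩
        show w b < w a
        rw [hai]; exact lt_trans hzv hv
      · simp only at hbj hia haj
        have hsa : Equiv.swap i j a = a := hto a (ne_of_gt hia) (ne_of_lt haj)
        have hsb : Equiv.swap i j b = i := by rw [hbj]; exact htj
        rw [hsa, hsb] at hzv
        refine ⟨hab, ?_, fun h => (ne_of_gt hia) (congrArg Prod.fst h)⟩
        show w b < w a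
        rw [hbj]; exact lt_trans hv hzv
    · rcases eq_or_ne a i with hai | hai
      · rcases eq_or_ne b j with hbj | hbj
        · have hsa : Equiv.swap i j a = j := by rw [hai]; exact hti
          have hsb : Equiv.swap i j b = i := by rw [hbj]; exact htj
          rw [hsa, hsb] at hzv
          exact absurd (lt_trans hzv hv) (lt_irrefl _)
        · have hib : i < b := hai ▸ hab
          have hbj' : j < b := by
            rcases lt_or_ge j b with h | h
            · exact h
            · exact absurd (Or.inl ⟨hai, hib, lt_of_le_of_ne h hbj⟩) hc
          have hsa : Equiv.swap i j a = j := by rw [hai]; exact hti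
          have hsb : Equiv.swap i j b = b := hto b (ne_of_gt hib) hbj
          rw [psi_neg_lt hc (by simp only [hsa, hsb]; exact hbj')]
          simp only [hsa, hsb]
          rw [hsa, hsb] at hzv
          exact ⟨hbj', hzv, fun h => hijne (congrArg Prod.fst h).symm⟩
      · rcases eq_or_ne a j with haj | haj
        · have hjb : j < b := haj ▸ hab
          have hsa : Equiv.swap i j a = i := by rw [haj]; exact htj
          have hsb : Equiv.swap i j b = b := hto b (ne_of_gt (lt_trans hij hjb)) (ne_of_gt hjb)
          rw [psi_neg_lt hc (by simp only [hsa, hsb]; exact lt_trans hij hjb)]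
          simp only [hsa, hsb]
          rw [hsa, hsb] at hzv
          exact ⟨lt_trans hij hjb, hzv, fun h => (ne_of_gt hjb) (congrArg Prod.snd h)⟩
        · rcases eq_or_ne b i with hbi | hbi
          · have hai' : a < i := hbi ▸ hab
            have hsa : Equiv.swap i j a = a := hto a hai haj
            have hsb : Equiv.swap i j b = j := by rw [hbi]; exact hti
            rw [psi_neg_lt hc (by simp only [hsa, hsb]; exact lt_trans hai' hij)]
            simp only [hsa, hsb]
            rw [hsa, hsb] at hzv
            exact ⟨lt_trans hai' hij, hzv, fun h => hai (congrArg Prod.fst h)⟩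
          · rcases eq_or_ne b j with hbj | hbj
            · have haj' : a < j := hbj ▸ hab
              have hai' : a < i := by
                rcases lt_or_ge a i with h | h
                · exact h
                · exact absurd (Or.inr ⟨hbj, lt_of_le_of_ne h (Ne.symm hai), haj'⟩) hc
              have hsa : Equiv.swap i j a = a := hto a hai haj
              have hsb : Equiv.swap i j b = i := by rw [hbj]; exact htj
              rw [psi_neg_lt hc (by simp only [hsa, hsb]; exact hai')]
              simp only [hsa, hsb]
              rw [hsa, hsb] at hzv
              exact ⟨hai', hzv, fun h => hijne (congrArg Prod.snd h)⟩
            · have hsa : Equiv.swap i j a = a := hto a hai haj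
              have hsb : Equiv.swap i j b = b := hto b hbi hbj
              rw [psi_neg_lt hc (by simp only [hsa, hsb]; exact hab)]
              simp only [hsa, hsb]
              rw [hsa, hsb] at hzv
              exact ⟨hab, hzv, fun h => hai (congrArg Prod.fst h)⟩
  -- conclude
  set Invw : Finset (Fin n × Fin n) :=
    Finset.univ.filter (fun p : Fin n × Fin n => p.1 < p.2 ∧ w p.2 < w p.1) with hIw
  set Invz : Finset (Fin n × Fin n) :=
    Finset.univ.filter (fun p : Fin n × Fin n =>
      p.1 < p.2 ∧ (w * Equiv.swap i j) p.2 < (w * Equiv.swap i j) p.1) with hIz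
  have hsub : ∀ p ∈ Invz, psi i j p ∈ Invw.erase (i, j) := by
    intro p hp
    rw [hIz, Finset.mem_filter] at hp
    obtain ⟨h1, h2, h3⟩ := hmap p hp.2.1 hp.2.2
    exact Finset.mem_erase.2 ⟨h3, Finset.mem_filter.2 ⟨Finset.mem_univ _, h1, h2⟩⟩
  have hinj : Set.InjOn (psi i j) Invz := by
    intro p hp p' hp' he
    have h1 : p.1 < p.2 := (Finset.mem_filter.1 hp).2.1
    have h2 : p'.1 < p'.2 := (Finset.mem_filter.1 hp').2.1
    have := hinv p h1
    rw [he, hinv p' h2] at this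
    exact this.symm
  have hc1 : Invz.card ≤ (Invw.erase (i, j)).card :=
    Finset.card_le_card_of_injOn (psi i j) hsub hinj
  have hmem : (i, j) ∈ Invw := Finset.mem_filter.2 ⟨Finset.mem_univ _, hij, hv⟩
  have hc2 : (Invw.erase (i, j)).card < Invw.card := Finset.card_erase_lt_of_mem hmem
  have hlz : len (w * Equiv.swap i j) = Invz.card := rfl
  have hlw : len w = Invw.card := rfl
  omega



lemma rk_prefix_eq {w z : Perm (Fin n)} {m : ℕ} (h : ∀ k : Fin n, (k : ℕ) < m → z k = w k)
    (b : ℕ) : rk z m b = rk w m b := by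
  unfold rk
  congr 1
  apply Finset.filter_congr
  intro k _
  constructor
  · rintro ⟨h1, h2⟩; exact ⟨h1, by rwa [← h k (by omega)]⟩
  · rintro ⟨h1, h2⟩; exact ⟨h1, by rwa [h k (by omega)]⟩

lemma descent (w z : Perm (Fin n)) (hle : BruhatLE z w) (hne : z ≠ w) :
    ∃ i j : Fin n, i < j ∧ w j < w i ∧ BruhatLE z (w * Equiv.swap i j) ∧
      len (w * Equiv.swap i j) < len w := by
  classical
  have hD : (Finset.univ.filter (fun k : Fin n => z k ≠ w k)).Nonempty := by
    by_contra h
    rw [Finset.not_nonempty_iff_eq_empty, Finset.filter_eq_empty_iff] at h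
    exact hne (Equiv.ext fun k => not_ne_iff.1 (h (Finset.mem_univ k)))
  set i := Finset.min' _ hD with hidef
  have hiD : z i ≠ w i := (Finset.mem_filter.1 (Finset.min'_mem _ hD)).2
  have hpre : ∀ k : Fin n, (k : ℕ) < (i : ℕ) → z k = w k := by
    intro k hk
    by_contra hzk
    have h2 : i ≤ k := Finset.min'_le _ k (Finset.mem_filter.2 ⟨Finset.mem_univ k, hzk⟩)
    have : (i : ℕ) ≤ (k : ℕ) := h2
    omega
  have hzi : z i < w i := by
    rcases lt_trichotomy (z i) (w i) with h | h | h
    · exact h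
    · exact absurd h hiD
    · exfalso
      have hb := hle ((i : ℕ) + 1) i.isLt ((w i : ℕ) + 1) (w i).isLt
      rw [rk_succ w (i : ℕ) i.isLt, rk_succ z (i : ℕ) i.isLt] at hb
      simp only [Fin.eta] at hb
      rw [rk_prefix_eq hpre] at hb
      have h' : ((w i : ℕ)) < ((z i : ℕ)) := h
      rw [if_pos (by omega), if_neg (by omega)] at hb
      omega
  have hS : (Finset.univ.filter (fun k : Fin n => i < k ∧ z i ≤ w k ∧ w k < w i)).Nonempty := by
    refine ⟨w⁻¹ (z i), Finset.mem_filter.2 ⟨Finset.mem_univ _, ?_, ?_, ?_⟩⟩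
    · have hk0 : w (w⁻¹ (z i)) = z i := w.apply_symm_apply (z i)
      rcases lt_trichotomy (w⁻¹ (z i)) i with h | h | h
      · exfalso
        have := hpre _ h
        rw [hk0] at this
        exact absurd (z.injective this) (ne_of_lt h)
      · exfalso
        rw [h] at hk0
        exact hiD hk0.symm
      · exact h
    · rw [show w (w⁻¹ (z i)) = z i from w.apply_symm_apply (z i)]
    · rw [show w (w⁻¹ (z i)) = z i from w.apply_symm_apply (z i)]; exact hzi
  set j := Finset.min' _ hS with hjdef
  have hjS := Finset.mem_filter.1 (Finset.min'_mem _ hS)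
  obtain ⟨-, hij, hjz, hjv⟩ := hjS
  have hjmin : ∀ k : Fin n, i < k → k < j → ¬ (z i ≤ w k ∧ w k < w i) := by
    intro k h1 h2 ⟨h3, h4⟩
    have : j ≤ k := Finset.min'_le _ _ (Finset.mem_filter.2 ⟨Finset.mem_univ _, h1, h3, h4⟩)
    have h5 : (j : ℕ) ≤ (k : ℕ) := this
    have h6 : (k : ℕ) < (j : ℕ) := h2
    omega
  have hble : BruhatLE z (w * Equiv.swap i j) := by
    intro a ha b hb
    rw [rk_swap_eq w i j hij hjv a b]
    by_cases hX : (i : ℕ) < a ∧ a ≤ (j : ℕ) ∧ (w j : ℕ) < b ∧ b ≤ (w i : ℕ)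
    · rw [if_pos hX]
      obtain ⟨hXa, hXb, hXc, hXd⟩ := hX
      have hβwj : ((z i : Fin n) : ℕ) ≤ ((w j : Fin n) : ℕ) := hjz
      have hβb : ((z i : Fin n) : ℕ) ≤ b := by omega
      rw [rk_split w a hβb, rk_split z a hβb]
      have hc1 : (Finset.univ.filter (fun k : Fin n =>
            (k : ℕ) + 1 ≤ a ∧ (z i : ℕ) + 1 ≤ (w k : ℕ) + 1 ∧ (w k : ℕ) + 1 ≤ b))
          = (Finset.univ.filter (fun k : Fin n =>
            (k : ℕ) + 1 ≤ (i : ℕ) ∧ (z i : ℕ) + 1 ≤ (w k : ℕ) + 1 ∧ (w k : ℕ) + 1 ≤ b)) := by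
        apply Finset.filter_congr
        intro k _
        constructor
        · rintro ⟨h1, h2, h3⟩
          refine ⟨?_, h2, h3⟩
          by_contra h4
          push_neg at h4
          have h4' : (i : ℕ) ≤ (k : ℕ) := by omega
          rcases eq_or_lt_of_le h4' with h5 | h5
          · have hki : k = i := Fin.ext h5.symm
            rw [hki] at h3
            omega
          · have hik : i < k := Fin.lt_def.2 h5
            have hkj : k < j := Fin.lt_def.2 (by omega)
            exact hjmin k hik hkj ⟨Fin.le_def.2 (by omega), Fin.lt_def.2 (by omega)⟩
        · rintro ⟨h1, h2, h3⟩
          exact ⟨by omega, h2, h3⟩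
      rw [hc1]
      have hc2 : (Finset.univ.filter (fun k : Fin n =>
            (k : ℕ) + 1 ≤ (i : ℕ) ∧ (z i : ℕ) + 1 ≤ (w k : ℕ) + 1 ∧ (w k : ℕ) + 1 ≤ b))
          = (Finset.univ.filter (fun k : Fin n =>
            (k : ℕ) + 1 ≤ (i : ℕ) ∧ (z i : ℕ) + 1 ≤ (z k : ℕ) + 1 ∧ (z k : ℕ) + 1 ≤ b)) := by
        apply Finset.filter_congr
        intro k _
        constructor
        · rintro ⟨h1, h2, h3⟩
          rw [← hpre k (by omega)] at h2 h3
          exact ⟨h1, h2, h3⟩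
        · rintro ⟨h1, h2, h3⟩
          rw [hpre k (by omega)] at h2 h3
          exact ⟨h1, h2, h3⟩
      rw [hc2]
      have hins : insert i (Finset.univ.filter (fun k : Fin n =>
            (k : ℕ) + 1 ≤ (i : ℕ) ∧ (z i : ℕ) + 1 ≤ (z k : ℕ) + 1 ∧ (z k : ℕ) + 1 ≤ b))
          ⊆ (Finset.univ.filter (fun k : Fin n =>
            (k : ℕ) + 1 ≤ a ∧ (z i : ℕ) + 1 ≤ (z k : ℕ) + 1 ∧ (z k : ℕ) + 1 ≤ b)) := by
        intro k hk
        rcases Finset.mem_insert.1 hk with rfl | hk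
        · exact Finset.mem_filter.2 ⟨Finset.mem_univ _, by omega, by omega, by omega⟩
        · obtain ⟨-, h1, h2, h3⟩ := Finset.mem_filter.1 hk
          exact Finset.mem_filter.2 ⟨Finset.mem_univ _, by omega, h2, h3⟩
      have hni : i ∉ (Finset.univ.filter (fun k : Fin n =>
            (k : ℕ) + 1 ≤ (i : ℕ) ∧ (z i : ℕ) + 1 ≤ (z k : ℕ) + 1 ∧ (z k : ℕ) + 1 ≤ b)) := by
        intro hk
        have := (Finset.mem_filter.1 hk).2.1
        omega
      have hcard := Finset.card_le_card hins
      rw [Finset.card_insert_of_notMem hni] at hcard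
      have hmono := hle a ha (z i : ℕ) (by omega)
      omega
    · rw [if_neg hX]
      exact hle a ha b hb
  exact ⟨i, j, hij, hjv, hble, len_mul_swap_lt w i j hij hjv⟩

lemma bruhat_len_lt_aux : ∀ N : ℕ, ∀ w z : Perm (Fin n), len w ≤ N → BruhatLE z w → z ≠ w →
    len z < len w := by
  intro N
  induction N with
  | zero =>
    intro w z hN hle hne
    obtain ⟨i, j, hij, hv, hble, hlen⟩ := descent w z hle hne
    omega
  | succ N ih =>
    intro w z hN hle hne
    obtain ⟨i, j, hij, hv, hble, hlen⟩ := descent w z hle hne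
    by_cases he : z = w * Equiv.swap i j
    · rw [← he] at hlen; exact hlen
    · exact lt_trans (ih _ z (by omega) hble he) hlen

lemma bruhat_len_lt {w z : Perm (Fin n)} (hle : BruhatLE z w) (hne : z ≠ w) :
    len z < len w :=
  bruhat_len_lt_aux (len w) w z le_rfl hle hne

lemma cover_structure (w z : Perm (Fin n)) (hz1 : BruhatLE z w) (hz2 : len z + 1 = len w) :
    ∃ i j : Fin n, i < j ∧ w j < w i ∧ z = w * Equiv.swap i j ∧
      ∀ k, i < k → k < j → ¬ (w j < w k ∧ w k < w i) := by
  have hne : z ≠ w := by intro h; rw [h] at hz2; omega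
  obtain ⟨i, j, hij, hv, hble, hlen⟩ := descent w z hz1 hne
  have hze : z = w * Equiv.swap i j := by
    by_contra he
    have := bruhat_len_lt hble he
    omega
  refine ⟨i, j, hij, hv, hze, ?_⟩
  rintro k hik hkj ⟨hk1, hk2⟩
  have h1 : len (w * Equiv.swap i k) < len w := len_mul_swap_lt w i k hik hk2
  have hkj' : (k : ℕ) ≤ (j : ℕ) := le_of_lt hkj
  have hwk : (w j : ℕ) ≤ (w k : ℕ) := le_of_lt hk1
  have hble2 : BruhatLE z (w * Equiv.swap i k) := by
    intro a ha b hb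
    have ez : rk z a b = rk w a b
        + (if (i : ℕ) < a ∧ a ≤ (j : ℕ) ∧ (w j : ℕ) < b ∧ b ≤ (w i : ℕ) then 1 else 0) := by
      rw [hze, rk_swap_eq w i j hij hv]
    rw [rk_swap_eq w i k hik hk2, ez]
    split_ifs <;> omega
  have hne2 : z ≠ w * Equiv.swap i k := by
    intro he
    have e1 := rk_swap_eq w i j hij hv ((k : ℕ) + 1) ((w j : ℕ) + 1)
    have e2 := rk_swap_eq w i k hik hk2 ((k : ℕ) + 1) ((w j : ℕ) + 1)
    rw [← hze] at e1
    rw [← he] at e2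
    have hik' : (i : ℕ) < (k : ℕ) := hik
    have hkj'' : (k : ℕ) < (j : ℕ) := hkj
    have hv' : (w j : ℕ) < (w i : ℕ) := hv
    rw [if_pos (by omega)] at e1
    rw [if_neg (by omega)] at e2
    omega
  have := bruhat_len_lt hble2 hne2
  omega

/-- if `u ≤ u * swap l M` in Bruhat rank order then `u l < u M` -/
lemma asc_of_le_mul_swap (u : Perm (Fin n)) (l : Fin n) (hl : (l : ℕ) + 1 < n)
    (h : BruhatLE u (u * Equiv.swap l ⟨(l : ℕ) + 1, hl⟩)) :
    u l < u ⟨(l : ℕ) + 1, hl⟩ := by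
  set M : Fin n := ⟨(l : ℕ) + 1, hl⟩ with hM
  have hMval : (M : ℕ) = (l : ℕ) + 1 := rfl
  have hlM : l < M := Fin.lt_def.2 (by omega)
  rcases lt_trichotomy (u l) (u M) with hcmp | hcmp | hcmp
  · exact hcmp
  · exact absurd (u.injective hcmp) (ne_of_lt hlM)
  · exfalso
    have e := rk_swap_eq u l M hlM hcmp ((l : ℕ) + 1) ((u M : ℕ) + 1)
    have hcmp' : (u M : ℕ) < (u l : ℕ) := hcmp
    rw [if_pos (by omega)] at e
    have := h ((l : ℕ) + 1) (by omega) ((u M : ℕ) + 1) (u M).isLt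
    omega

/-- if `u * swap l M ≤ u` in Bruhat rank order then `u M < u l` -/
lemma desc_of_mul_swap_le (u : Perm (Fin n)) (l : Fin n) (hl : (l : ℕ) + 1 < n)
    (h : BruhatLE (u * Equiv.swap l ⟨(l : ℕ) + 1, hl⟩) u) :
    u ⟨(l : ℕ) + 1, hl⟩ < u l := by
  set M : Fin n := ⟨(l : ℕ) + 1, hl⟩ with hM
  have hMval : (M : ℕ) = (l : ℕ) + 1 := rfl
  have hlM : l < M := Fin.lt_def.2 (by omega)
  rcases lt_trichotomy (u M) (u l) with hcmp | hcmp | hcmp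
  · exact hcmp
  · exact absurd (u.injective hcmp) (ne_of_gt hlM)
  · exfalso
    set u' : Perm (Fin n) := u * Equiv.swap l M with hu'
    have hu'l : u' l = u M := by rw [hu', Perm.mul_apply, Equiv.swap_apply_left]
    have hu'M : u' M = u l := by rw [hu', Perm.mul_apply, Equiv.swap_apply_right]
    have hval : u' M < u' l := by rw [hu'l, hu'M]; exact hcmp
    have huu : u' * Equiv.swap l M = u := by
      rw [hu', mul_assoc, Equiv.swap_mul_self, mul_one]
    have e := rk_swap_eq u' l M hlM hval ((l : ℕ) + 1) ((u' M : ℕ) + 1)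
    rw [huu] at e
    have hval' : (u' M : ℕ) < (u' l : ℕ) := hval
    rw [if_pos (by omega)] at e
    have hb : (u' M : ℕ) + 1 ≤ n := (u' M).isLt
    have := h ((l : ℕ) + 1) (by omega) ((u' M : ℕ) + 1) hb
    omega

lemma avoidA (w : Perm (Fin n)) (hw3 : ¬ Has3412 w) (hw4 : ¬ Has4231 w)
    (p q g : Fin n) (hpq : p < q) (hqg : (g : ℕ) = (q : ℕ) + 1)
    (hba : w q < w p) (hv1 : w q < w g) (hv2 : w g < w p)
    (hcov : ∀ k, p < k → k < q → ¬ (w q < w k ∧ w k < w p)) :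
    ¬ Has3412 (w * Equiv.swap p q) ∧ ¬ Has4231 (w * Equiv.swap p q) := by
  set Z := w * Equiv.swap p q with hZ
  have ep : Z p = w q := by rw [hZ, Perm.mul_apply, Equiv.swap_apply_left]
  have eq' : Z q = w p := by rw [hZ, Perm.mul_apply, Equiv.swap_apply_right]
  have eo : ∀ x : Fin n, x ≠ p → x ≠ q → Z x = w x := fun x h1 h2 => by
    rw [hZ, Perm.mul_apply, Equiv.swap_apply_of_ne_of_ne h1 h2]
  constructor
  · -- no 3412 in Z
    rintro ⟨a, b, c, d, hab, hbc, hcd, u1, u2, u3⟩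
    rcases eq_or_ne a p with hap | hap
    · rcases eq_or_ne b q with hbq | hbq
      · -- leaf 2a : a = p, b = q
        rw [hap] at u2
        rw [hbq] at hbc
        have hcq' : c ≠ q := ne_of_gt hbc
        have hcp' : c ≠ p := ne_of_gt (lt_trans hpq hbc)
        have hdq' : d ≠ q := ne_of_gt (lt_trans hbc hcd)
        have hdp' : d ≠ p := ne_of_gt (lt_trans hpq (lt_trans hbc hcd))
        rw [eo c hcp' hcq', eo d hdp' hdq'] at u1
        rw [eo d hdp' hdq', ep] at u2
        have hwc : w c < w q := lt_trans u1 u2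
        have hcg : c ≠ g := by
          rintro rfl
          exact absurd (lt_trans hwc hv1) (lt_irrefl _)
        have Hqc : (q : ℕ) < (c : ℕ) := hbc
        have Hcg : (c : ℕ) ≠ (g : ℕ) := fun e => hcg (Fin.ext e)
        exact hw4 ⟨p, q, g, c, hpq, Fin.lt_def.2 (by omega), Fin.lt_def.2 (by omega),
          hwc, hv1, hv2⟩
      · rcases eq_or_ne c q with hcq | hcq
        · -- impossible: a = p, c = q
          rw [hap, ep] at u2
          rw [hcq, eq'] at u1
          exact absurd (lt_trans u1 u2) (lt_asymm hba)
        · rcases eq_or_ne d q with hdq | hdq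
          · -- impossible: a = p, d = q
            rw [hap, hdq, eq', ep] at u2
            exact absurd u2 (lt_asymm hba)
          · -- leaf 3a : a = p, q ∉ S
            rw [hap] at hab u2 u3
            have hbp' : b ≠ p := ne_of_gt hab
            have hcp' : c ≠ p := ne_of_gt (lt_trans hab hbc)
            have hdp' : d ≠ p := ne_of_gt (lt_trans (lt_trans hab hbc) hcd)
            rw [eo c hcp' hcq, eo d hdp' hdq] at u1
            rw [eo d hdp' hdq, ep] at u2
            rw [ep, eo b hbp' hbq] at u3
            rcases lt_or_gt_of_ne ((Equiv.injective w).ne hbp') with hc1 | hc1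
            · -- w b < w p
              have hnb : ¬ (b < q) := fun hh => hcov b hab hh ⟨u3, hc1⟩
              have Hqb : q < b := lt_of_le_of_ne (not_lt.1 hnb) (Ne.symm hbq)
              exact hw3 ⟨q, b, c, d, Hqb, hbc, hcd, u1, u2, u3⟩
            · -- w p < w b
              exact hw3 ⟨p, b, c, d, hab, hbc, hcd, u1, lt_trans u2 hba, hc1⟩
    · rcases eq_or_ne b p with hbp | hbp
      · rcases eq_or_ne c q with hcq | hcq
        · -- impossible: b = p, c = q
          rw [hbp, ep] at u3
          rw [hcq, eq'] at u1
          exact absurd (lt_trans u1 (lt_trans u2 u3)) (lt_asymm hba)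
        · rcases eq_or_ne d q with hdq | hdq
          · -- impossible: b = p, d = q
            rw [hdq, eq'] at u2
            rw [hbp, ep] at u3
            exact absurd (lt_trans u2 u3) (lt_asymm hba)
          · -- leaf 3b : b = p
            rw [hbp] at hab hbc u3
            have hap' : a ≠ p := ne_of_lt hab
            have haq' : a ≠ q := ne_of_lt (lt_trans hab hpq)
            have hcp' : c ≠ p := ne_of_gt hbc
            have hdp' : d ≠ p := ne_of_gt (lt_trans hbc hcd)
            rw [eo c hcp' hcq, eo d hdp' hdq] at u1
            rw [eo d hdp' hdq, eo a hap' haq'] at u2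
            rw [eo a hap' haq', ep] at u3
            exact hw3 ⟨a, p, c, d, hab, hbc, hcd, u1, u2, lt_trans u3 hba⟩
      · rcases eq_or_ne c p with hcp | hcp
        · rcases eq_or_ne d q with hdq | hdq
          · -- leaf 2b : c = p, d = q
            rw [hcp] at hbc hcd u1
            rw [hdq] at u2
            have hap' : a ≠ p := ne_of_lt (lt_trans hab hbc)
            have haq' : a ≠ q := ne_of_lt (lt_trans (lt_trans hab hbc) hpq)
            have hbp' : b ≠ p := ne_of_lt hbc
            have hbq' : b ≠ q := ne_of_lt (lt_trans hbc hpq)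
            rw [eq', eo a hap' haq'] at u2
            rw [eo a hap' haq', eo b hbp' hbq'] at u3
            have Hbq : b < q := lt_trans hbc hpq
            have Hqc : (q : ℕ) < (g : ℕ) := by omega
            exact hw3 ⟨a, b, q, g, hab, Hbq, Fin.lt_def.2 Hqc, hv1, lt_trans hv2 u2, u3⟩
          · -- leaf 3c : c = p, q ∉ S
            rw [hcp] at hbc hcd u1
            have hap' : a ≠ p := ne_of_lt (lt_trans hab hbc)
            have haq' : a ≠ q := ne_of_lt (lt_trans (lt_trans hab hbc) hpq)
            have hbp' : b ≠ p := ne_of_lt hbc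
            have hbq' : b ≠ q := ne_of_lt (lt_trans hbc hpq)
            have hdp' : d ≠ p := ne_of_gt hcd
            rw [ep, eo d hdp' hdq] at u1
            rw [eo d hdp' hdq, eo a hap' haq'] at u2
            rw [eo a hap' haq', eo b hbp' hbq'] at u3
            rcases lt_or_gt_of_ne ((Equiv.injective w).ne hdp') with hc1 | hc1
            · -- w d < w p : cover forces q < d
              have hnd : ¬ (d < q) := fun hh => hcov d hcd hh ⟨u1, hc1⟩
              have Hqd : q < d := lt_of_le_of_ne (not_lt.1 hnd) (Ne.symm hdq)
              exact hw3 ⟨a, b, q, d, hab, lt_trans hbc hpq, Hqd, u1, u2, u3⟩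
            · -- w p < w d
              exact hw3 ⟨a, b, p, d, hab, hbc, hcd, hc1, u2, u3⟩
        · rcases eq_or_ne d p with hdp | hdp
          · -- leaf 3d : d = p
            rw [hdp] at hcd u1 u2
            have hap' : a ≠ p := ne_of_lt (lt_trans hab (lt_trans hbc hcd))
            have haq' : a ≠ q := ne_of_lt (lt_trans (lt_trans hab (lt_trans hbc hcd)) hpq)
            have hbp' : b ≠ p := ne_of_lt (lt_trans hbc hcd)
            have hbq' : b ≠ q := ne_of_lt (lt_trans (lt_trans hbc hcd) hpq)
            have hcp' : c ≠ p := ne_of_lt hcd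
            have hcq' : c ≠ q := ne_of_lt (lt_trans hcd hpq)
            rw [eo c hcp' hcq', ep] at u1
            rw [ep, eo a hap' haq'] at u2
            rw [eo a hap' haq', eo b hbp' hbq'] at u3
            exact hw3 ⟨a, b, c, q, hab, hbc, lt_trans hcd hpq, u1, u2, u3⟩
          · -- p ∉ S
            rcases eq_or_ne a q with haq | haq
            · -- leaf 4a : a = q
              rw [haq] at hab u2 u3
              have hbq' : b ≠ q := ne_of_gt hab
              have hcq' : c ≠ q := ne_of_gt (lt_trans hab hbc)
              have hdq' : d ≠ q := ne_of_gt (lt_trans (lt_trans hab hbc) hcd)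
              rw [eo c hcp hcq', eo d hdp hdq'] at u1
              rw [eo d hdp hdq', eq'] at u2
              rw [eq', eo b hbp hbq'] at u3
              exact hw3 ⟨p, b, c, d, lt_trans hpq hab, hbc, hcd, u1, u2, u3⟩
            · rcases eq_or_ne b q with hbq | hbq
              · -- leaf 4b : b = q
                rw [hbq] at hab hbc u3
                have hcq' : c ≠ q := ne_of_gt hbc
                have hdq' : d ≠ q := ne_of_gt (lt_trans hbc hcd)
                rw [eo c hcp hcq', eo d hdp hdq'] at u1
                rw [eo d hdp hdq', eo a hap haq] at u2
                rw [eo a hap haq, eq'] at u3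
                rcases lt_or_gt_of_ne hap with hc1 | hc1
                · -- a < p
                  exact hw3 ⟨a, p, c, d, hc1, lt_trans hpq hbc, hcd, u1, u2, u3⟩
                · -- p < a : cover forces w a < w q
                  have hna : ¬ (w q < w a) := fun hh => hcov a hc1 hab ⟨hh, u3⟩
                  have Haq : w a < w q :=
                    lt_of_le_of_ne (not_lt.1 hna) ((Equiv.injective w).ne haq)
                  exact hw3 ⟨a, q, c, d, hab, hbc, hcd, u1, u2, Haq⟩
              · rcases eq_or_ne c q with hcq | hcq
                · -- leaf 4c : c = q
                  rw [hcq] at hbc hcd u1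
                  have hdq' : d ≠ q := ne_of_gt hcd
                  rw [eq', eo d hdp hdq'] at u1
                  rw [eo d hdp hdq', eo a hap haq] at u2
                  rw [eo a hap haq, eo b hbp hbq] at u3
                  exact hw3 ⟨a, b, q, d, hab, hbc, hcd, lt_trans hba u1, u2, u3⟩
                · rcases eq_or_ne d q with hdq | hdq
                  · -- leaf 4d : d = q
                    rw [hdq] at hcd u1 u2
                    rw [eo c hcp hcq, eq'] at u1
                    rw [eq', eo a hap haq] at u2
                    rw [eo a hap haq, eo b hbp hbq] at u3
                    rcases lt_or_gt_of_ne ((Equiv.injective w).ne hcq) with hc1 | hc1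
                    · -- w c < w q
                      exact hw3 ⟨a, b, c, q, hab, hbc, hcd, hc1, lt_trans hba u2, u3⟩
                    · -- w q < w c : cover forces c < p
                      have hnc : ¬ (p < c) := fun hh => hcov c hh hcd ⟨hc1, u1⟩
                      have Hcp : c < p := lt_of_le_of_ne (not_lt.1 hnc) hcp
                      exact hw3 ⟨a, b, c, p, hab, hbc, Hcp, u1, u2, u3⟩
                  · -- none
                    rw [eo c hcp hcq, eo d hdp hdq] at u1
                    rw [eo d hdp hdq, eo a hap haq] at u2
                    rw [eo a hap haq, eo b hbp hbq] at u3
                    exact hw3 ⟨a, b, c, d, hab, hbc, hcd, u1, u2, u3⟩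
  · -- no 4231 in Z
    rintro ⟨a, b, c, d, hab, hbc, hcd, u1, u2, u3⟩
    rcases eq_or_ne a p with hap | hap
    · rcases eq_or_ne b q with hbq | hbq
      · -- impossible: a = p, b = q
        rw [hbq, eq'] at u2
        rw [hap, ep] at u3
        exact absurd (lt_trans u2 u3) (lt_asymm hba)
      · rcases eq_or_ne c q with hcq | hcq
        · -- impossible: a = p, c = q
          rw [hcq, hap, eq', ep] at u3
          exact absurd u3 (lt_asymm hba)
        · rcases eq_or_ne d q with hdq | hdq
          · -- impossible: a = p, d = q
            rw [hdq, eq'] at u1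
            rw [hap, ep] at u3
            exact absurd (lt_trans u1 (lt_trans u2 u3)) (lt_asymm hba)
          · -- leaf 3a' : a = p
            rw [hap] at hab u3
            have hbp' : b ≠ p := ne_of_gt hab
            have hcp' : c ≠ p := ne_of_gt (lt_trans hab hbc)
            have hdp' : d ≠ p := ne_of_gt (lt_trans (lt_trans hab hbc) hcd)
            rw [eo d hdp' hdq, eo b hbp' hbq] at u1
            rw [eo b hbp' hbq, eo c hcp' hcq] at u2
            rw [eo c hcp' hcq, ep] at u3
            exact hw4 ⟨p, b, c, d, hab, hbc, hcd, u1, u2, lt_trans u3 hba⟩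
    · rcases eq_or_ne b p with hbp | hbp
      · rcases eq_or_ne c q with hcq | hcq
        · -- leaf 2' : b = p, c = q
          rw [hbp] at hab hbc u1
          rw [hcq] at hbc hcd u3
          have hap' : a ≠ p := ne_of_lt hab
          have haq' : a ≠ q := ne_of_lt (lt_trans hab hpq)
          have hdq' : d ≠ q := ne_of_gt hcd
          have hdp' : d ≠ p := ne_of_gt (lt_trans hpq hcd)
          rw [eo d hdp' hdq', ep] at u1
          rw [eq', eo a hap' haq'] at u3
          have hdg : d ≠ g := by
            rintro rfl
            exact absurd (lt_trans u1 hv1) (lt_irrefl _)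
          have Hqd : (q : ℕ) < (d : ℕ) := hcd
          have Hdg : (d : ℕ) ≠ (g : ℕ) := fun e => hdg (Fin.ext e)
          exact hw4 ⟨a, q, g, d, lt_trans hab hpq, Fin.lt_def.2 (by omega),
            Fin.lt_def.2 (by omega), u1, hv1, lt_trans hv2 u3⟩
        · rcases eq_or_ne d q with hdq | hdq
          · -- impossible: b = p, d = q
            rw [hdq, hbp, eq', ep] at u1
            exact absurd u1 (lt_asymm hba)
          · -- leaf 3b' : b = p
            rw [hbp] at hab hbc u1 u2
            have hap' : a ≠ p := ne_of_lt hab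
            have haq' : a ≠ q := ne_of_lt (lt_trans hab hpq)
            have hcp' : c ≠ p := ne_of_gt hbc
            have hdp' : d ≠ p := ne_of_gt (lt_trans hbc hcd)
            rw [eo d hdp' hdq, ep] at u1
            rw [ep, eo c hcp' hcq] at u2
            rw [eo c hcp' hcq, eo a hap' haq'] at u3
            rcases lt_or_gt_of_ne ((Equiv.injective w).ne hcp') with hc1 | hc1
            · -- w c < w p : cover forces q < c
              have hnc : ¬ (c < q) := fun hh => hcov c hbc hh ⟨u2, hc1⟩
              have Hqc : q < c := lt_of_le_of_ne (not_lt.1 hnc) (Ne.symm hcq)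
              exact hw4 ⟨a, q, c, d, lt_trans hab hpq, Hqc, hcd, u1, u2, u3⟩
            · -- w p < w c
              exact hw4 ⟨a, p, c, d, hab, hbc, hcd, lt_trans u1 hba, hc1, u3⟩
      · rcases eq_or_ne c p with hcp | hcp
        · rcases eq_or_ne d q with hdq | hdq
          · -- impossible: c = p, d = q
            rw [hdq, eq'] at u1
            rw [hcp, ep] at u2
            exact absurd (lt_trans u1 u2) (lt_asymm hba)
          · -- leaf 3c' : c = p
            rw [hcp] at hbc hcd u2 u3
            have hap' : a ≠ p := ne_of_lt (lt_trans hab hbc)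
            have haq' : a ≠ q := ne_of_lt (lt_trans (lt_trans hab hbc) hpq)
            have hbp' : b ≠ p := ne_of_lt hbc
            have hbq' : b ≠ q := ne_of_lt (lt_trans hbc hpq)
            have hdp' : d ≠ p := ne_of_gt hcd
            rw [eo d hdp' hdq, eo b hbp' hbq'] at u1
            rw [eo b hbp' hbq', ep] at u2
            rw [ep, eo a hap' haq'] at u3
            rcases lt_or_gt_of_ne hdq with hc2 | hc2
            · -- d < q
              rcases lt_or_gt_of_ne ((Equiv.injective w).ne hap') with hc1 | hc1
              · -- w a < w p : 3412 at (a,p,d,q)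
                exact hw3 ⟨a, p, d, q, lt_trans hab hbc, hcd, hc2,
                  lt_trans u1 u2, u3, hc1⟩
              · -- w p < w a
                exact hw4 ⟨a, b, p, d, hab, hbc, hcd, u1, lt_trans u2 hba, hc1⟩
            · -- q < d
              exact hw4 ⟨a, b, q, d, hab, lt_trans hbc hpq, hc2, u1, u2, u3⟩
        · rcases eq_or_ne d p with hdp | hdp
          · -- leaf 3d' : d = p
            rw [hdp] at hcd u1
            have hap' : a ≠ p := ne_of_lt (lt_trans hab (lt_trans hbc hcd))
            have haq' : a ≠ q := ne_of_lt (lt_trans (lt_trans hab (lt_trans hbc hcd)) hpq)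
            have hbp' : b ≠ p := ne_of_lt (lt_trans hbc hcd)
            have hbq' : b ≠ q := ne_of_lt (lt_trans (lt_trans hbc hcd) hpq)
            have hcp' : c ≠ p := ne_of_lt hcd
            have hcq' : c ≠ q := ne_of_lt (lt_trans hcd hpq)
            rw [ep, eo b hbp' hbq'] at u1
            rw [eo b hbp' hbq', eo c hcp' hcq'] at u2
            rw [eo c hcp' hcq', eo a hap' haq'] at u3
            exact hw4 ⟨a, b, c, q, hab, hbc, lt_trans hcd hpq, u1, u2, u3⟩
          · -- p ∉ S
            rcases eq_or_ne a q with haq | haq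
            · -- leaf 4a' : a = q
              rw [haq] at hab u3
              have hbq' : b ≠ q := ne_of_gt hab
              have hcq' : c ≠ q := ne_of_gt (lt_trans hab hbc)
              have hdq' : d ≠ q := ne_of_gt (lt_trans (lt_trans hab hbc) hcd)
              rw [eo d hdp hdq', eo b hbp hbq'] at u1
              rw [eo b hbp hbq', eo c hcp hcq'] at u2
              rw [eo c hcp hcq', eq'] at u3
              exact hw4 ⟨p, b, c, d, lt_trans hpq hab, hbc, hcd, u1, u2, u3⟩
            · rcases eq_or_ne b q with hbq | hbq
              · -- leaf 4b' : b = q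
                rw [hbq] at hab hbc u1 u2
                have hcq' : c ≠ q := ne_of_gt hbc
                have hdq' : d ≠ q := ne_of_gt (lt_trans hbc hcd)
                rw [eo d hdp hdq', eq'] at u1
                rw [eq', eo c hcp hcq'] at u2
                rw [eo c hcp hcq', eo a hap haq] at u3
                rcases lt_or_gt_of_ne hap with hc1 | hc1
                · -- a < p
                  exact hw4 ⟨a, p, c, d, hc1, lt_trans hpq hbc, hcd, u1, u2, u3⟩
                · -- p < a
                  rcases lt_or_gt_of_ne ((Equiv.injective w).ne hdq') with hc2 | hc2
                  · -- w d < w q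
                    exact hw4 ⟨a, q, c, d, hab, hbc, hcd, hc2, lt_trans hba u2, u3⟩
                  · -- w q < w d : 3412 at (p,a,q,d)
                    exact hw3 ⟨p, a, q, d, hc1, hab, lt_trans hbc hcd,
                      hc2, u1, lt_trans u2 u3⟩
              · rcases eq_or_ne c q with hcq | hcq
                · -- leaf 4c' : c = q
                  rw [hcq] at hbc hcd u2 u3
                  have hdq' : d ≠ q := ne_of_gt hcd
                  rw [eo d hdp hdq', eo b hbp hbq] at u1
                  rw [eo b hbp hbq, eq'] at u2
                  rw [eq', eo a hap haq] at u3
                  rcases lt_or_gt_of_ne ((Equiv.injective w).ne hbq) with hc1 | hc1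
                  · -- w b < w q
                    exact hw4 ⟨a, b, q, d, hab, hbc, hcd, u1, hc1, lt_trans hba u3⟩
                  · -- w q < w b : cover forces b < p
                    have hnb : ¬ (p < b) := fun hh => hcov b hh hbc ⟨hc1, u2⟩
                    have Hbp : b < p := lt_of_le_of_ne (not_lt.1 hnb) hbp
                    exact hw4 ⟨a, b, p, d, hab, Hbp, lt_trans hpq hcd, u1, u2, u3⟩
                · rcases eq_or_ne d q with hdq | hdq
                  · -- leaf 4d' : d = q
                    rw [hdq] at hcd u1
                    rw [eq', eo b hbp hbq] at u1
                    rw [eo b hbp hbq, eo c hcp hcq] at u2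
                    rw [eo c hcp hcq, eo a hap haq] at u3
                    exact hw4 ⟨a, b, c, q, hab, hbc, hcd, lt_trans hba u1, u2, u3⟩
                  · -- none
                    rw [eo d hdp hdq, eo b hbp hbq] at u1
                    rw [eo b hbp hbq, eo c hcp hcq] at u2
                    rw [eo c hcp hcq, eo a hap haq] at u3
                    exact hw4 ⟨a, b, c, d, hab, hbc, hcd, u1, u2, u3⟩


lemma has3412_conj (u : Perm (Fin n))
    (hu : Has3412 (Fin.revPerm * u * Fin.revPerm)) : Has3412 u := by
  obtain ⟨a, b, c, d, hab, hbc, hcd, u1, u2, u3⟩ := hu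
  simp only [Perm.mul_apply, Fin.revPerm_apply] at u1 u2 u3
  exact ⟨Fin.rev d, Fin.rev c, Fin.rev b, Fin.rev a,
    Fin.rev_lt_rev.2 hcd, Fin.rev_lt_rev.2 hbc, Fin.rev_lt_rev.2 hab,
    Fin.rev_lt_rev.1 u3, Fin.rev_lt_rev.1 u2, Fin.rev_lt_rev.1 u1⟩

lemma has4231_conj (u : Perm (Fin n))
    (hu : Has4231 (Fin.revPerm * u * Fin.revPerm)) : Has4231 u := by
  obtain ⟨a, b, c, d, hab, hbc, hcd, u1, u2, u3⟩ := hu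
  simp only [Perm.mul_apply, Fin.revPerm_apply] at u1 u2 u3
  exact ⟨Fin.rev d, Fin.rev c, Fin.rev b, Fin.rev a,
    Fin.rev_lt_rev.2 hcd, Fin.rev_lt_rev.2 hbc, Fin.rev_lt_rev.2 hab,
    Fin.rev_lt_rev.1 u3, Fin.rev_lt_rev.1 u2, Fin.rev_lt_rev.1 u1⟩


end StmtAux

open StmtAux in
/-- For smooth `w` with `sw < w < ws`, any `z` covered by `w` with `zs < z`
is itself smooth. -/
theorem stmt7 {n : ℕ} (w : Equiv.Perm (Fin n)) (hw : SmoothPerm w)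
    (l : Fin n) (hl : (l : ℕ) + 1 < n)
    (s : Equiv.Perm (Fin n)) (hs : s = Equiv.swap l ⟨(l : ℕ) + 1, hl⟩)
    (h1 : BruhatLT (s * w) w) (h2 : BruhatLT w (w * s))
    (z : Equiv.Perm (Fin n))
    (hz1 : BruhatLE z w) (hz2 : len z + 1 = len w) (hz3 : BruhatLT (z * s) z) :
    SmoothPerm z := by
  classical
  set M : Fin n := ⟨(l : ℕ) + 1, hl⟩ with hM
  have hMval : (M : ℕ) = (l : ℕ) + 1 := rfl
  have hlM : l ≠ M := Fin.ne_of_val_ne (by omega)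
  have h2' := h2.1
  rw [hs] at h2'
  have hasc : w l < w M := asc_of_le_mul_swap w l hl h2'
  have hz3' := hz3.1
  rw [hs] at hz3'
  have hzd : z M < z l := desc_of_mul_swap_le z l hl hz3'
  obtain ⟨p, q, hpq, hvpq, hze, hcov⟩ := cover_structure w z hz1 hz2
  rcases eq_or_ne q l with hql | hql
  · -- Case A : q = l, p < l
    rw [hql] at hpq hvpq hze hcov
    have hMp : M ≠ p := Fin.ne_of_val_ne (by have : (p : ℕ) < (l : ℕ) := hpq; omega)
    have hMl : M ≠ l := Ne.symm hlM
    have hzl : z l = w p := by rw [hze, Perm.mul_apply, Equiv.swap_apply_right]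
    have hzM : z M = w M := by
      rw [hze, Perm.mul_apply, Equiv.swap_apply_of_ne_of_ne hMp hMl]
    have hvpM : w M < w p := by rw [← hzl, ← hzM]; exact hzd
    obtain ⟨A3, A4⟩ := avoidA w hw.1 hw.2 p l M hpq hMval hvpq hasc hvpM hcov
    rw [hze]
    exact ⟨A3, A4⟩
  · rcases eq_or_ne q M with hqM | hqM
    · rcases eq_or_ne p l with hpl | hpl
      · -- z = w * s : impossible by lengths
        have hzs : z = w * s := by rw [hze, hpl, hqM, hs]
        have hb1 : BruhatLE w z := by rw [hzs]; exact h2.1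
        have hne : z ≠ w := fun e => by rw [e] at hz2; omega
        have l1 := bruhat_len_lt hz1 hne
        have l2 := bruhat_len_lt hb1 (Ne.symm hne)
        omega
      · -- q = M, p < l : contradiction
        rw [hqM] at hvpq hze
        have hlp : l ≠ p := Ne.symm hpl
        have hzl : z l = w l := by
          rw [hze, Perm.mul_apply, Equiv.swap_apply_of_ne_of_ne hlp hlM]
        have hzM : z M = w p := by rw [hze, Perm.mul_apply, Equiv.swap_apply_right]
        rw [hzM, hzl] at hzd
        exact absurd hasc (lt_asymm (lt_trans hvpq hzd))
    · rcases eq_or_ne p l with hpl | hpl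
      · -- p = l, q ∉ {l, M} : contradiction
        rw [hpl] at hvpq hze
        have hMq : M ≠ q := Ne.symm hqM
        have hzl : z l = w q := by rw [hze, Perm.mul_apply, Equiv.swap_apply_left]
        have hzM : z M = w M := by
          rw [hze, Perm.mul_apply, Equiv.swap_apply_of_ne_of_ne (Ne.symm hlM) hMq]
        rw [hzM, hzl] at hzd
        exact absurd hasc (lt_asymm (lt_trans hzd hvpq))
      · rcases eq_or_ne p M with hpM | hpM
        · -- Case B : p = M, q > M
          rw [hpM] at hpq hvpq hze hcov
          have hzM : z M = w q := by rw [hze, Perm.mul_apply, Equiv.swap_apply_left]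
          have hzl : z l = w l := by
            rw [hze, Perm.mul_apply, Equiv.swap_apply_of_ne_of_ne hlM (Ne.symm hql)]
          rw [hzM, hzl] at hzd
          -- hzd : w q < w l,  hvpq : w q < w M,  hasc : w l < w M
          set R : Perm (Fin n) := Fin.revPerm with hR
          have hRapp : ∀ x : Fin n, R x = Fin.rev x := fun x => rfl
          have hRR : R * R = 1 := by
            ext x
            simp [hR, Perm.mul_apply, Fin.rev_rev]
          have hRinv : R⁻¹ = R := by
            rw [inv_eq_iff_mul_eq_one, hRR]
          set W : Perm (Fin n) := R * w * R with hW
          have eW : ∀ x : Fin n, W (Fin.rev x) = Fin.rev (w x) := by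
            intro x
            simp [hW, hR, Perm.mul_apply, Fin.rev_rev]
          have hW3 : ¬ Has3412 W := fun hh => hw.1 (has3412_conj w hh)
          have hW4 : ¬ Has4231 W := fun hh => hw.2 (has4231_conj w hh)
          have hpq' : Fin.rev q < Fin.rev M := Fin.rev_lt_rev.2 hpq
          have hqg' : ((Fin.rev l : Fin n) : ℕ) = ((Fin.rev M : Fin n) : ℕ) + 1 := by
            rw [Fin.val_rev, Fin.val_rev]
            omega
          have hba' : W (Fin.rev M) < W (Fin.rev q) := by
            rw [eW, eW]; exact Fin.rev_lt_rev.2 hvpq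
          have hv1' : W (Fin.rev M) < W (Fin.rev l) := by
            rw [eW, eW]; exact Fin.rev_lt_rev.2 hasc
          have hv2' : W (Fin.rev l) < W (Fin.rev q) := by
            rw [eW, eW]; exact Fin.rev_lt_rev.2 hzd
          have hcov' : ∀ K, Fin.rev q < K → K < Fin.rev M →
              ¬ (W (Fin.rev M) < W K ∧ W K < W (Fin.rev q)) := by
            intro K hK1 hK2 hKv
            rw [← Fin.rev_rev K] at hK1 hK2 hKv
            simp only [eW] at hKv
            exact hcov (Fin.rev K) (Fin.rev_lt_rev.1 hK2) (Fin.rev_lt_rev.1 hK1)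
              ⟨Fin.rev_lt_rev.1 hKv.2, Fin.rev_lt_rev.1 hKv.1⟩
          obtain ⟨B3, B4⟩ := avoidA W hW3 hW4 (Fin.rev q) (Fin.rev M) (Fin.rev l)
            hpq' hqg' hba' hv1' hv2' hcov'
          have hswap : R * Equiv.swap M q * R = Equiv.swap (Fin.rev M) (Fin.rev q) := by
            have hsw := Equiv.swap_apply_apply R M q
            rw [hRinv] at hsw
            rw [← hsw, hRapp, hRapp]
          have E : W * Equiv.swap (Fin.rev q) (Fin.rev M) = R * z * R := by
            rw [Equiv.swap_comm, ← hswap, hze]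
            ext x
            simp [hW, hR, Perm.mul_apply, Fin.rev_rev]
          rw [E] at B3 B4
          have hconj2 : R * (R * z * R) * R = z := by
            ext x
            simp [hR, Perm.mul_apply, Fin.rev_rev]
          constructor
          · intro hhz
            exact B3 (has3412_conj (R * z * R) (by rw [hconj2]; exact hhz))
          · intro hhz
            exact B4 (has4231_conj (R * z * R) (by rw [hconj2]; exact hhz))
        · -- p, q ∉ {l, M} : contradiction
          have hzl : z l = w l := by
            rw [hze, Perm.mul_apply,
              Equiv.swap_apply_of_ne_of_ne (Ne.symm hpl) (Ne.symm hql)]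
          have hzM : z M = w M := by
            rw [hze, Perm.mul_apply,
              Equiv.swap_apply_of_ne_of_ne (Ne.symm hpM) (Ne.symm hqM)]
          rw [hzM, hzl] at hzd
          exact absurd hasc (lt_asymm hzd)
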